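/- For all partitions ν, ν̄, the two-leg topological vertex satisfies the inversion symmetry W_{ν ν̄}(w) = (−1)^{|ν|+|ν̄|} ι(W_{νᵀ ν̄ᵀ}(w)), where ι is the field automorphism of ℚ(w) with ι(w) = w^{−1}. In the variable q = w² this reads W_{ν ν̄}(q) = (−1)^{|ν|+|ν̄|} W_{νᵀ ν̄ᵀ}(q^{−1}). -/

import Mathlib

/-- A partition: a non-increasing sequence of non-negative integers
with only finitely many nonzero terms.  `part i` is the part `μ_{i+1}`
(0-based indexing). -/
structure NPartition where
  part : ℕ → ℕ
  antitone : ∀ ⦃i j : ℕ⦄, i ≤ j → part j ≤ part i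
  eventually_zero : ∃ N : ℕ, ∀ i : ℕ, N ≤ i → part i = 0

/-- The conjugate partition: `conj f j = #{i ≥ 1 : f_i ≥ j+1}`. -/
noncomputable def conj (f : ℕ → ℕ) (j : ℕ) : ℕ :=
  Nat.card {i : ℕ // j + 1 ≤ f i}

/-- The number of nonzero parts `ℓ(μ)`. -/
noncomputable def plen (f : ℕ → ℕ) : ℕ :=
  Nat.card {i : ℕ // f i ≠ 0}

/-- The weight `|μ| = Σ_i μ_i`. -/
noncomputable def wsum (f : ℕ → ℕ) : ℕ := ∑ᶠ i : ℕ, f i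

/-- The complete homogeneous generators `h_m ∈ ℚ[p_1, p_2, …]`
(with `p_k` the variable `X (k-1)`), characterized by `h_0 = 1` and the
Newton-type recursion `(m+1) h_{m+1} = Σ_{k=1}^{m+1} p_k h_{m+1-k}`, which is
equivalent (over ℚ) to `Σ_{m≥0} h_m z^m = exp(Σ_{k≥1} (p_k/k) z^k)`. -/
noncomputable def hp : ℕ → MvPolynomial ℕ ℚ
  | 0 => 1
  | m + 1 =>
      ((m : ℚ) + 1)⁻¹ • ∑ k ∈ Finset.range (m + 1), MvPolynomial.X k * hp (m - k)
  decreasing_by exact Nat.lt_succ_of_le (Nat.sub_le m k)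

/-- `h_m` for `m ∈ ℤ`, with `h_m = 0` for `m < 0`. -/
noncomputable def hInt (m : ℤ) : MvPolynomial ℕ ℚ :=
  if 0 ≤ m then hp m.toNat else 0

/-- The skew Jacobi–Trudi determinant
`S_{μ/ν} = det(h_{μ_i − ν_j − i + j})_{1 ≤ i,j ≤ n}` (0-based indexing of parts). -/
noncomputable def Sdet (f g : ℕ → ℕ) (n : ℕ) : MvPolynomial ℕ ℚ :=
  Matrix.det (Matrix.of fun i j : Fin n =>
    hInt ((f i : ℤ) - (g j : ℤ) - (i : ℤ) + (j : ℤ)))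


/-- `κ(ν) = Σ_{i ≥ 1} ν_i (ν_i - 2 i + 1)`, written with 0-based indexing. -/
noncomputable def kappa (f : ℕ → ℕ) : ℤ :=
  ∑ᶠ i : ℕ, (f i : ℤ) * ((f i : ℤ) - 2 * (i : ℤ) - 1)

/-- The specialization `p_k = 1/(w^k − w^{−k})` in `ℚ(w)`
(the variable `X m` of `ℚ[p_1, p_2, …]` stands for `p_{m+1}`). -/
noncomputable def Pspec (m : ℕ) : RatFunc ℚ :=
  ((RatFunc.X : RatFunc ℚ) ^ ((m : ℤ) + 1) - RatFunc.X ^ (-((m : ℤ) + 1)))⁻¹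

/-- The skew Schur polynomial `S_{f/g}` (Jacobi–Trudi determinant of size n)
evaluated at `p_k = 1/(w^k − w^{−k})`. -/
noncomputable def Seval (f g : ℕ → ℕ) (n : ℕ) : RatFunc ℚ :=
  MvPolynomial.aeval Pspec (Sdet f g n)

/-- The two-leg topological vertex
`W_{ν ν̄}(w) = w^{κ(ν)+κ(ν̄)} Σ_η S_{νᵀ/η}(P) S_{ν̄ᵀ/η}(P)`,
the sum ranging over partitions η (only the finitely many η contained in both
νᵀ and ν̄ᵀ contribute, the other skew Schur determinants being zero).  The
determinant size is taken large enough for every η. -/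
noncomputable def Wtl (f g : ℕ → ℕ) : RatFunc ℚ :=
  (RatFunc.X : RatFunc ℚ) ^ (kappa f + kappa g) *
    ∑ᶠ η : NPartition,
      Seval (conj f) η.part (max (f 0) (max (g 0) (plen η.part))) *
      Seval (conj g) η.part (max (f 0) (max (g 0) (plen η.part)))


set_option linter.unusedVariables false

section
open Finset MvPolynomial


/-! ### Partitions -/

def IsPart (f : ℕ → ℕ) : Prop :=
  (∀ ⦃i j : ℕ⦄, i ≤ j → f j ≤ f i) ∧ ∃ N : ℕ, ∀ i : ℕ, N ≤ i → f i = 0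


lemma dc_mem_iff_lt_card {F : Finset ℕ} (h : ∀ a ∈ F, ∀ b, b ≤ a → b ∈ F) (a : ℕ) :
    a ∈ F ↔ a < F.card := by
  rcases F.eq_empty_or_nonempty with rfl | hne
  · simp
  · have hF : F = Finset.range (F.max' hne + 1) := by
      ext b
      simp only [Finset.mem_range, Nat.lt_succ_iff]
      exact ⟨fun hb => F.le_max' b hb, fun hb => h _ (F.max'_mem hne) b hb⟩
    rw [hF, Finset.card_range, Finset.mem_range]

lemma conj_set_finite {f : ℕ → ℕ} (hf : IsPart f) (j : ℕ) :
    {i : ℕ | j + 1 ≤ f i}.Finite := by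
  obtain ⟨N, hN⟩ := hf.2
  apply (Set.finite_Iio N).subset
  intro i hi
  simp only [Set.mem_Iio]
  by_contra h
  push_neg at h
  have := hN i h
  simp only [Set.mem_setOf_eq, this] at hi
  omega

lemma conj_eq_card {f : ℕ → ℕ} (hf : IsPart f) (j : ℕ) :
    conj f j = (conj_set_finite hf j).toFinset.card := by
  rw [conj, ← Nat.card_eq_card_finite_toFinset (conj_set_finite hf j)]
  rfl

lemma lt_conj_iff {f : ℕ → ℕ} (hf : IsPart f) {i j : ℕ} :
    j + 1 ≤ f i ↔ i + 1 ≤ conj f j := by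
  rw [conj_eq_card hf j]
  have hdc : ∀ a ∈ (conj_set_finite hf j).toFinset, ∀ b, b ≤ a →
      b ∈ (conj_set_finite hf j).toFinset := by
    intro a ha b hb
    simp only [Set.Finite.mem_toFinset, Set.mem_setOf_eq] at ha ⊢
    exact le_trans ha (hf.1 hb)
  have := dc_mem_iff_lt_card hdc i
  simp only [Set.Finite.mem_toFinset, Set.mem_setOf_eq] at this
  omega

lemma conj_anti {f : ℕ → ℕ} (hf : IsPart f) {i j : ℕ} (hij : i ≤ j) :
    conj f j ≤ conj f i := by
  by_contra h
  push_neg at h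
  -- conj f i < conj f j, set a := conj f i
  have h1 : conj f i + 1 ≤ conj f j := h
  have h2 : j + 1 ≤ f (conj f i) := (lt_conj_iff hf).mpr h1
  have h3 : ¬ (i + 1 ≤ f (conj f i)) := by
    intro hh
    have := (lt_conj_iff hf).mp hh
    omega
  omega

lemma conj_eq_zero {f : ℕ → ℕ} (hf : IsPart f) {j : ℕ} (hj : f 0 ≤ j) :
    conj f j = 0 := by
  by_contra h
  have h1 : 0 + 1 ≤ conj f j := by omega
  have := (lt_conj_iff hf).mpr h1
  omega

lemma conj_isPart {f : ℕ → ℕ} (hf : IsPart f) : IsPart (conj f) :=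
  ⟨fun _ _ hij => conj_anti hf hij, ⟨f 0, fun _ hi => conj_eq_zero hf hi⟩⟩

lemma conj_conj {f : ℕ → ℕ} (hf : IsPart f) : conj (conj f) = f := by
  funext i
  have key : ∀ a : ℕ, a + 1 ≤ conj (conj f) i ↔ a + 1 ≤ f i := by
    intro a
    rw [← lt_conj_iff (conj_isPart hf)]
    rw [lt_conj_iff hf]
  by_contra h
  rcases Nat.lt_or_ge (conj (conj f) i) (f i) with hlt | hge
  · have := (key (conj (conj f) i)).mpr hlt
    omega
  · have hlt : f i < conj (conj f) i := by omega
    have := (key (f i)).mp hlt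
    omega

lemma plen_eq_conj_zero (f : ℕ → ℕ) : plen f = conj f 0 := by
  rw [plen, conj]
  exact Nat.card_congr (Equiv.subtypeEquivRight (fun i => by omega))

lemma lt_plen_iff {f : ℕ → ℕ} (hf : IsPart f) {i : ℕ} :
    i + 1 ≤ plen f ↔ f i ≠ 0 := by
  rw [plen_eq_conj_zero, ← lt_conj_iff hf]
  omega

lemma apply_eq_zero_of_plen_le {f : ℕ → ℕ} (hf : IsPart f) {i : ℕ} (hi : plen f ≤ i) :
    f i = 0 := by
  by_contra h
  have := (lt_plen_iff hf).mpr h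
  omega

lemma conj_le_plen {f : ℕ → ℕ} (hf : IsPart f) (j : ℕ) : conj f j ≤ plen f := by
  rw [plen_eq_conj_zero]
  exact conj_anti hf (Nat.zero_le j)

lemma plen_conj {f : ℕ → ℕ} (hf : IsPart f) : plen (conj f) = f 0 := by
  rw [plen_eq_conj_zero]
  exact congrFun (conj_conj hf) 0

lemma conj_eq_of {f : ℕ → ℕ} (hf : IsPart f) {j c : ℕ}
    (h1 : ∀ i, i < c → j + 1 ≤ f i) (h2 : f c ≤ j) : conj f j = c := by
  have hle : conj f j ≤ c := by
    by_contra h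
    push_neg at h
    have : c + 1 ≤ conj f j := h
    have := (lt_conj_iff hf).mpr this
    omega
  have hge : c ≤ conj f j := by
    rcases Nat.eq_zero_or_pos c with rfl | hc
    · omega
    · have h3 := h1 (c-1) (by omega)
      have h4 := (lt_conj_iff hf).mp h3
      omega
  omega

lemma wsum_eq_sum {f : ℕ → ℕ} {N : ℕ} (hN : ∀ i, N ≤ i → f i = 0) :
    wsum f = ∑ i ∈ Finset.range N, f i := by
  rw [wsum]
  apply finsum_eq_sum_of_support_subset
  intro i hi
  simp only [Function.mem_support] at hi
  simp only [Finset.coe_range, Set.mem_Iio]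
  by_contra h
  exact hi (hN i (by omega))

lemma le_wsum {f : ℕ → ℕ} (hf : IsPart f) (i : ℕ) : f i ≤ wsum f := by
  obtain ⟨N, hN⟩ := hf.2
  rcases Nat.lt_or_ge i N with h | h
  · rw [wsum_eq_sum hN]
    exact Finset.single_le_sum (fun _ _ => Nat.zero_le _) (Finset.mem_range.mpr h)
  · rw [hN i h]; exact Nat.zero_le _

end

section
open Finset MvPolynomial



lemma hp_zero : hp 0 = 1 := by rw [hp]

lemma hp_succ (m : ℕ) :
    ((m : ℚ) + 1) • hp (m + 1) = ∑ k ∈ Finset.range (m + 1), X k * hp (m - k) := by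
  rw [hp, smul_smul, mul_inv_cancel₀ (by exact_mod_cast Nat.succ_ne_zero m), one_smul]

noncomputable def negP : MvPolynomial ℕ ℚ →ₐ[ℚ] MvPolynomial ℕ ℚ :=
  aeval (fun k => - X k)

@[simp] lemma negP_X (k : ℕ) : negP (X k) = - X k := aeval_X _ _

lemma negP_negP (p : MvPolynomial ℕ ℚ) : negP (negP p) = p := by
  have h : negP.comp negP = AlgHom.id ℚ (MvPolynomial ℕ ℚ) := by
    apply algHom_ext
    intro k
    simp [negP]
  calc negP (negP p) = (negP.comp negP) p := rfl
    _ = p := by rw [h]; rfl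

noncomputable def bp (m : ℕ) : MvPolynomial ℕ ℚ := negP (hp m)

lemma bp_zero : bp 0 = 1 := by rw [bp, hp_zero, map_one]

lemma bp_succ (m : ℕ) :
    ((m : ℚ) + 1) • bp (m + 1) = - ∑ k ∈ Finset.range (m + 1), X k * bp (m - k) := by
  have := congrArg negP (hp_succ m)
  rw [map_smul, map_sum] at this
  rw [bp, this, ← Finset.sum_neg_distrib]
  apply Finset.sum_congr rfl
  intro k _
  rw [map_mul, negP_X, bp, neg_mul]

lemma triangle_swap {M : Type*} [AddCommMonoid M] (t : ℕ) (G : ℕ → ℕ → M) :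
    ∑ u ∈ Finset.range t, ∑ l ∈ Finset.range (u + 1), G l (u - l)
      = ∑ k ∈ Finset.range t, ∑ l ∈ Finset.range (t - k), G l k := by
  rw [Finset.sum_sigma', Finset.sum_sigma']
  apply Finset.sum_nbij' (i := fun p => (⟨p.1 - p.2, p.2⟩ : (_ : ℕ) × ℕ))
    (j := fun p => (⟨p.1 + p.2, p.2⟩ : (_ : ℕ) × ℕ))
  · rintro ⟨u, l⟩ ha
    simp only [Finset.mem_sigma, Finset.mem_range] at ha ⊢
    omega
  · rintro ⟨k, l⟩ ha
    simp only [Finset.mem_sigma, Finset.mem_range] at ha ⊢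
    omega
  · rintro ⟨u, l⟩ ha
    simp only [Finset.mem_sigma, Finset.mem_range] at ha
    have h1 : u - l + l = u := by omega
    rw [h1]
  · rintro ⟨k, l⟩ ha
    simp only [Finset.mem_sigma, Finset.mem_range] at ha
    have h1 : k + l - l = k := by omega
    rw [h1]
  · rintro ⟨u, l⟩ ha
    rfl

lemma conv_pos (t : ℕ) (ht : t ≠ 0) :
    ∑ k ∈ Finset.range (t + 1), bp k * hp (t - k) = 0 := by
  have key : (t : ℚ) • (∑ k ∈ Finset.range (t + 1), bp k * hp (t - k)) = 0 := by
    rw [Finset.smul_sum]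
    have hterm : ∀ k ∈ Finset.range (t + 1),
        (t : ℚ) • (bp k * hp (t - k))
          = ((k : ℚ) • bp k) * hp (t - k) + bp k * (((t - k : ℕ) : ℚ) • hp (t - k)) := by
      intro k hk
      rw [Finset.mem_range] at hk
      have hcast : (t : ℚ) = (k : ℚ) + ((t - k : ℕ) : ℚ) := by
        have h : k + (t - k) = t := by omega
        calc (t : ℚ) = ((k + (t - k) : ℕ) : ℚ) := by rw [h]
          _ = (k : ℚ) + ((t - k : ℕ) : ℚ) := by push_cast; ring
      rw [hcast, add_smul, smul_mul_assoc, mul_smul_comm]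
    rw [Finset.sum_congr rfl hterm, Finset.sum_add_distrib]
    -- A part
    have hA : ∑ k ∈ Finset.range (t + 1), ((k : ℚ) • bp k) * hp (t - k)
        = - ∑ u ∈ Finset.range t, ∑ l ∈ Finset.range (u + 1),
            bp (u - l) * (X l * hp (t - 1 - u)) := by
      rw [Finset.sum_range_succ']
      simp only [Nat.cast_zero, zero_smul, zero_mul, add_zero]
      rw [← Finset.sum_neg_distrib]
      apply Finset.sum_congr rfl
      intro u hu
      rw [Finset.mem_range] at hu
      have h1 : ((u + 1 : ℕ) : ℚ) = (u : ℚ) + 1 := by push_cast; ring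
      have h2 : t - (u + 1) = t - 1 - u := by omega
      rw [h1, bp_succ, h2, neg_mul, Finset.sum_mul]
      congr 1
      apply Finset.sum_congr rfl
      intro l _
      ring
    -- B part
    have hB : ∑ k ∈ Finset.range (t + 1), bp k * (((t - k : ℕ) : ℚ) • hp (t - k))
        = ∑ k ∈ Finset.range t, ∑ l ∈ Finset.range (t - k),
            bp k * (X l * hp (t - 1 - k - l)) := by
      rw [Finset.sum_range_succ]
      simp only [Nat.sub_self, Nat.cast_zero, zero_smul, smul_zero, mul_zero, add_zero]
      apply Finset.sum_congr rfl
      intro k hk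
      rw [Finset.mem_range] at hk
      have h2 : t - k = (t - 1 - k) + 1 := by omega
      rw [h2, Nat.cast_add, Nat.cast_one, hp_succ, Finset.mul_sum]
    rw [hA, hB]
    rw [neg_add_eq_zero]
    have := triangle_swap t (fun l k => bp k * (X l * hp (t - 1 - (k + l))))
    calc ∑ u ∈ Finset.range t, ∑ l ∈ Finset.range (u + 1), bp (u - l) * (X l * hp (t - 1 - u))
        = ∑ u ∈ Finset.range t, ∑ l ∈ Finset.range (u + 1),
            bp (u - l) * (X l * hp (t - 1 - ((u - l) + l))) := by
          apply Finset.sum_congr rfl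
          intro u _
          apply Finset.sum_congr rfl
          intro l hl
          rw [Finset.mem_range] at hl
          have : u - l + l = u := by omega
          rw [this]
      _ = ∑ k ∈ Finset.range t, ∑ l ∈ Finset.range (t - k),
            bp k * (X l * hp (t - 1 - (k + l))) := this
      _ = ∑ k ∈ Finset.range t, ∑ l ∈ Finset.range (t - k),
            bp k * (X l * hp (t - 1 - k - l)) := by
          apply Finset.sum_congr rfl
          intro k _
          apply Finset.sum_congr rfl
          intro l _
          have : t - 1 - (k + l) = t - 1 - k - l := by omega
          rw [this]
  have htQ : (t : ℚ) ≠ 0 := by exact_mod_cast ht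
  have h2 := congrArg (fun x => (t : ℚ)⁻¹ • x) key
  simpa [smul_smul, inv_mul_cancel₀ htQ] using h2

noncomputable def bInt (z : ℤ) : MvPolynomial ℕ ℚ := negP (hInt z)

lemma hInt_ofNat (k : ℕ) : hInt (k : ℤ) = hp k := by
  rw [hInt, if_pos (by exact_mod_cast Nat.zero_le k), Int.toNat_natCast]

lemma hInt_neg {z : ℤ} (h : z < 0) : hInt z = 0 := if_neg (by omega)

lemma bInt_neg {z : ℤ} (h : z < 0) : bInt z = 0 := by rw [bInt, hInt_neg h, map_zero]

lemma hInt_zero : hInt 0 = 1 := by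
  have := hInt_ofNat 0
  simpa [hp_zero] using this

lemma bInt_zero : bInt 0 = 1 := by rw [bInt, hInt_zero, map_one]

lemma bInt_ofNat (k : ℕ) : bInt (k : ℤ) = bp k := by rw [bInt, hInt_ofNat, bp]

end

section
open Finset MvPolynomial Matrix


noncomputable def Mmat (N : ℕ) : Matrix (Fin N) (Fin N) (MvPolynomial ℕ ℚ) :=
  Matrix.of fun a b => bInt (((b : ℕ) : ℤ) - ((a : ℕ) : ℤ))

noncomputable def Bmat (N : ℕ) : Matrix (Fin N) (Fin N) (MvPolynomial ℕ ℚ) :=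
  Matrix.of fun a b => hInt (((b : ℕ) : ℤ) - ((a : ℕ) : ℤ))

lemma det_Mmat (N : ℕ) : (Mmat N).det = 1 := by
  have h : (Mmat N).BlockTriangular id := by
    intro i j hij
    have hij' : (j : ℕ) < (i : ℕ) := hij
    show bInt _ = 0
    apply bInt_neg
    omega
  rw [Matrix.det_of_upperTriangular h]
  apply Finset.prod_eq_one
  intro a _
  show bInt _ = 1
  rw [sub_self, bInt_zero]

lemma Mmat_mul_Bmat (N : ℕ) : Mmat N * Bmat N = 1 := by
  ext a d
  rw [Matrix.mul_apply]
  have hsum : ∑ c : Fin N, Mmat N a c * Bmat N c d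
      = ∑ i ∈ Finset.range N, bInt ((i : ℤ) - ((a : ℕ) : ℤ)) * hInt (((d : ℕ) : ℤ) - (i : ℤ)) := by
    rw [← Fin.sum_univ_eq_sum_range (fun i => bInt ((i : ℤ) - ((a : ℕ) : ℤ))
      * hInt (((d : ℕ) : ℤ) - (i : ℤ))) N]
    rfl
  rw [hsum]
  by_cases had : (a : ℕ) ≤ (d : ℕ)
  · -- sum over Icc
    have hsub : Finset.Icc (a : ℕ) (d : ℕ) ⊆ Finset.range N := by
      intro i hi
      rw [Finset.mem_Icc] at hi
      rw [Finset.mem_range]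
      omega
    rw [← Finset.sum_subset hsub ?_]
    · rw [← Finset.Ico_add_one_right_eq_Icc, Finset.sum_Ico_eq_sum_range]
      have hr : (d : ℕ) + 1 - (a : ℕ) = ((d : ℕ) - (a : ℕ)) + 1 := by omega
      rw [hr]
      have hcong : ∀ k ∈ Finset.range (((d : ℕ) - (a : ℕ)) + 1),
          bInt ((((a : ℕ) + k : ℕ) : ℤ) - ((a : ℕ) : ℤ))
            * hInt (((d : ℕ) : ℤ) - (((a : ℕ) + k : ℕ) : ℤ))
          = bp k * hp (((d : ℕ) - (a : ℕ)) - k) := by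
        intro k hk
        rw [Finset.mem_range] at hk
        have h1 : (((a : ℕ) + k : ℕ) : ℤ) - ((a : ℕ) : ℤ) = (k : ℤ) := by push_cast; ring
        have h2 : ((d : ℕ) : ℤ) - (((a : ℕ) + k : ℕ) : ℤ)
            = ((((d : ℕ) - (a : ℕ)) - k : ℕ) : ℤ) := by push_cast [Nat.cast_sub]; omega
        rw [h1, h2, bInt_ofNat, hInt_ofNat]
      rw [Finset.sum_congr rfl hcong]
      rcases Nat.eq_zero_or_pos ((d : ℕ) - (a : ℕ)) with h0 | hpos
      · have had : a = d := by
          apply Fin.ext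
          omega
        rw [h0, had, Matrix.one_apply_eq]
        simp [bp_zero, hp_zero]
      · rw [conv_pos _ (by omega)]
        have hne : a ≠ d := by
          intro h
          rw [h] at hpos
          omega
        rw [Matrix.one_apply_ne hne]
    · intro i hi hnot
      rw [Finset.mem_range] at hi
      rw [Finset.mem_Icc] at hnot
      push_neg at hnot
      rcases Nat.lt_or_ge i (a : ℕ) with h | h
      · rw [bInt_neg (by omega), zero_mul]
      · rw [hInt_neg (by omega), mul_zero]
  · -- d < a : everything vanishes
    have hz : ∀ i ∈ Finset.range N,
        bInt ((i : ℤ) - ((a : ℕ) : ℤ)) * hInt (((d : ℕ) : ℤ) - (i : ℤ)) = 0 := by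
      intro i _
      rcases Nat.lt_or_ge i (a : ℕ) with h | h
      · rw [bInt_neg (by omega), zero_mul]
      · rw [hInt_neg (by omega), mul_zero]
    rw [Finset.sum_congr rfl hz, Finset.sum_const_zero]
    have had : a ≠ d := by
      intro h
      rw [h] at had
      omega
    rw [Matrix.one_apply_ne had]

section blocks

variable {R : Type*} [CommRing R] {n m : ℕ}

lemma block_inv_det (P Q : Matrix (Fin n ⊕ Fin m) (Fin n ⊕ Fin m) R)
    (h : P * Q = 1) :
    P.det * (Q.toBlocks₁₁).det = (P.toBlocks₂₂).det := by
  have hone11 : (1 : Matrix (Fin n ⊕ Fin m) (Fin n ⊕ Fin m) R).toBlocks₁₁ = 1 := by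
    ext i j
    simp [Matrix.toBlocks₁₁, Matrix.one_apply, Sum.inl.injEq]
  have hone21 : (1 : Matrix (Fin n ⊕ Fin m) (Fin n ⊕ Fin m) R).toBlocks₂₁ = 0 := by
    ext i j
    simp [Matrix.toBlocks₂₁, Matrix.one_apply]
  have hP := Matrix.fromBlocks_toBlocks P
  have hQ := Matrix.fromBlocks_toBlocks Q
  rw [← hP, ← hQ, Matrix.fromBlocks_multiply] at h
  have h11 : P.toBlocks₁₁ * Q.toBlocks₁₁ + P.toBlocks₁₂ * Q.toBlocks₂₁ = 1 := by
    have h' := congrArg Matrix.toBlocks₁₁ h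
    simpa [Matrix.toBlocks_fromBlocks₁₁, hone11] using h'
  have h21 : P.toBlocks₂₁ * Q.toBlocks₁₁ + P.toBlocks₂₂ * Q.toBlocks₂₁ = 0 := by
    have h' := congrArg Matrix.toBlocks₂₁ h
    simpa [Matrix.toBlocks_fromBlocks₂₁, hone21] using h'
  have key : (Matrix.fromBlocks P.toBlocks₁₁ P.toBlocks₁₂ P.toBlocks₂₁ P.toBlocks₂₂)
        * Matrix.fromBlocks Q.toBlocks₁₁ 0 Q.toBlocks₂₁ 1
      = Matrix.fromBlocks 1 P.toBlocks₁₂ 0 P.toBlocks₂₂ := by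
    rw [Matrix.fromBlocks_multiply]
    rw [Matrix.mul_zero, Matrix.mul_one, Matrix.mul_zero, Matrix.mul_one, zero_add, zero_add]
    rw [h11, h21]
  rw [hP] at key
  have hdet := congrArg Matrix.det key
  rw [Matrix.det_mul, Matrix.det_fromBlocks_zero₁₂, Matrix.det_fromBlocks_zero₂₁,
    Matrix.det_one, Matrix.det_one, mul_one, one_mul] at hdet
  exact hdet

lemma det_submatrix_equivs {L : Type*} [Fintype L] [DecidableEq L] {N : ℕ}
    (A : Matrix (Fin N) (Fin N) R) (e g : L ≃ Fin N) :
    (A.submatrix e g).det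
      = ((Equiv.Perm.sign (e.symm.trans g) : ℤ) : R) * A.det := by
  have h1 : A.submatrix e g = (A.submatrix id (e.symm.trans g : Equiv.Perm (Fin N))).submatrix e e := by
    ext i j
    simp [Matrix.submatrix_apply]
  rw [h1, Matrix.det_submatrix_equiv_self, Matrix.det_permute']

end blocks

end

section
open Finset Equiv


def vval (f : ℕ → ℕ) (n i : ℕ) : ℕ := f i + (n - 1 - i)

noncomputable def wval (f : ℕ → ℕ) (n j : ℕ) : ℕ := j + (n - conj f j)

section rho

variable {f : ℕ → ℕ} {n m : ℕ}

lemma vval_lt (hf : IsPart f) (hm : f 0 ≤ m) {i : ℕ} (hi : i < n) : vval f n i < n + m := by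
  have h0 := hf.1 (Nat.zero_le i)
  unfold vval
  omega

lemma wval_lt (hf : IsPart f) (hn : plen f ≤ n) {j : ℕ} (hj : j < m) : wval f n j < n + m := by
  unfold wval
  omega

lemma vval_anti (hf : IsPart f) {i j : ℕ} (hij : i < j) (hj : j < n) :
    vval f n j + (j - i) ≤ vval f n i := by
  have h0 := hf.1 (le_of_lt hij)
  unfold vval
  omega

lemma vval_le (hf : IsPart f) {i j : ℕ} (hij : i ≤ j) (hj : j < n) :
    vval f n j ≤ vval f n i := by
  rcases Nat.eq_or_lt_of_le hij with rfl | h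
  · exact le_refl _
  · have := vval_anti (n := n) hf h hj
    omega

lemma wval_mono (hf : IsPart f) (hn : plen f ≤ n) {j j' : ℕ} (h : j < j') :
    wval f n j + (j' - j) ≤ wval f n j' := by
  have h1 := conj_anti hf (le_of_lt h)
  have h2 := conj_le_plen hf j
  have h3 := conj_le_plen hf j'
  unfold wval
  omega

lemma v_ne_w (hf : IsPart f) (hn : plen f ≤ n) {i j : ℕ} (hi : i < n) :
    vval f n i ≠ wval f n j := by
  have hc : conj f j ≤ n := le_trans (conj_le_plen hf j) hn
  by_cases h : j + 1 ≤ f i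
  · have h2 := (lt_conj_iff hf).mp h
    unfold vval wval
    omega
  · push_neg at h
    have h2 : ¬ (i + 1 ≤ conj f j) := fun hh => absurd ((lt_conj_iff hf).mpr hh) (by omega)
    push_neg at h2
    unfold vval wval
    omega

noncomputable def rho (f : ℕ → ℕ) (n m : ℕ) (hf : IsPart f) (hn : plen f ≤ n) (hm : f 0 ≤ m) :
    (Fin n ⊕ Fin m) ≃ Fin (n + m) :=
  Equiv.ofBijective
    (Sum.elim (fun i : Fin n => (⟨vval f n i, vval_lt hf hm i.isLt⟩ : Fin (n+m)))
      (fun j : Fin m => (⟨wval f n j, wval_lt hf hn j.isLt⟩ : Fin (n+m))))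
    (by
      refine (Fintype.bijective_iff_injective_and_card _).mpr ⟨?_, by simp⟩
      rintro (i | j) (i' | j') h <;>
        simp only [Sum.elim_inl, Sum.elim_inr, Fin.mk.injEq] at h
      · have hval : (i : ℕ) = (i' : ℕ) := by
          by_contra hne
          rcases Nat.lt_or_ge (i : ℕ) (i' : ℕ) with hlt | hge
          · have := vval_anti hf hlt i'.isLt
            omega
          · have hlt : (i' : ℕ) < (i : ℕ) := by omega
            have := vval_anti hf hlt i.isLt
            omega
        exact congrArg Sum.inl (Fin.ext hval)
      · exact absurd h (v_ne_w hf hn i.isLt)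
      · exact absurd h.symm (v_ne_w hf hn i'.isLt)
      · have hval : (j : ℕ) = (j' : ℕ) := by
          by_contra hne
          rcases Nat.lt_or_ge (j : ℕ) (j' : ℕ) with hlt | hge
          · have := wval_mono hf hn hlt
            omega
          · have hlt : (j' : ℕ) < (j : ℕ) := by omega
            have := wval_mono hf hn hlt
            omega
        exact congrArg Sum.inr (Fin.ext hval))

@[simp] lemma rho_inl (hf : IsPart f) (hn : plen f ≤ n) (hm : f 0 ≤ m) (i : Fin n) :
    (rho f n m hf hn hm (Sum.inl i) : ℕ) = vval f n i := rfl

@[simp] lemma rho_inr (hf : IsPart f) (hn : plen f ≤ n) (hm : f 0 ≤ m) (j : Fin m) :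
    (rho f n m hf hn hm (Sum.inr j) : ℕ) = wval f n j := rfl

end rho

def zeroF : ℕ → ℕ := fun _ => 0

lemma zeroF_isPart : IsPart zeroF := ⟨fun _ _ _ => le_refl 0, ⟨0, fun _ _ => rfl⟩⟩

lemma plen_zeroF : plen zeroF = 0 := by
  rw [plen_eq_conj_zero]
  exact conj_eq_of zeroF_isPart (fun i hi => absurd hi (by omega)) (Nat.zero_le 0)

noncomputable def piPerm (f : ℕ → ℕ) (n m : ℕ) (hf : IsPart f) (hn : plen f ≤ n)
    (hm : f 0 ≤ m) : Equiv.Perm (Fin (n + m)) :=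
  (rho zeroF n m zeroF_isPart (by rw [plen_zeroF]; omega) (by exact Nat.zero_le m)).symm.trans
    (rho f n m hf hn hm)

def decF (f : ℕ → ℕ) (i0 : ℕ) : ℕ → ℕ := fun i => if i = i0 then f i0 - 1 else f i

lemma decF_le (f : ℕ → ℕ) (i0 : ℕ) : ∀ i, decF f i0 i ≤ f i := by
  intro i
  unfold decF
  split_ifs with h
  · subst h; omega
  · exact le_refl _

lemma plen_le_plen {f g : ℕ → ℕ} (hf : IsPart f) (hg : IsPart g) (h : ∀ i, f i ≤ g i) :
    plen f ≤ plen g := by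
  rcases Nat.eq_zero_or_pos (plen f) with h0 | hpos
  · omega
  · have h1 := (lt_plen_iff hf).mp (show plen f - 1 + 1 ≤ plen f by omega)
    have h2 : g (plen f - 1) ≠ 0 := by
      have := h (plen f - 1)
      omega
    have h3 := (lt_plen_iff hg).mpr h2
    omega

section dec

variable {f : ℕ → ℕ} {n m i0 : ℕ}

lemma decF_isPart (hf : IsPart f) (hi0 : plen f = i0 + 1) : IsPart (decF f i0) := by
  have ha : 1 ≤ f i0 := by
    have := (lt_plen_iff hf (i := i0)).mp (by omega)
    omega
  constructor
  · intro i j hij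
    have hmono := hf.1 hij
    unfold decF
    split_ifs with h1 h2 h2
    · exact le_refl _
    · -- j = i0, i ≠ i0 : f i0 - 1 ≤ f i
      subst h1
      omega
    · -- i = i0, j ≠ i0, i0 ≤ j so i0 < j, f j = 0
      subst h2
      have hj : plen f ≤ j := by omega
      have := apply_eq_zero_of_plen_le hf hj
      omega
    · exact hmono
  · refine ⟨plen f, fun i hi => ?_⟩
    unfold decF
    rw [if_neg (by omega)]
    exact apply_eq_zero_of_plen_le hf hi

lemma wsum_decF (hf : IsPart f) (hi0 : plen f = i0 + 1) :
    wsum f = wsum (decF f i0) + 1 := by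
  obtain ⟨N, hN⟩ := hf.2
  have hN1 : ∀ i, max N (i0 + 1) ≤ i → f i = 0 := fun i hi => hN i (by omega)
  have hN2 : ∀ i, max N (i0 + 1) ≤ i → decF f i0 i = 0 := by
    intro i hi
    unfold decF
    rw [if_neg (by omega)]
    exact hN i (by omega)
  rw [wsum_eq_sum hN1, wsum_eq_sum hN2]
  have hi0mem : i0 ∈ Finset.range (max N (i0 + 1)) := by
    rw [Finset.mem_range]
    omega
  rw [← Finset.sum_erase_add _ _ hi0mem, ← Finset.sum_erase_add _ _ hi0mem]
  have heq : ∑ i ∈ (Finset.range (max N (i0 + 1))).erase i0, decF f i0 i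
      = ∑ i ∈ (Finset.range (max N (i0 + 1))).erase i0, f i := by
    apply Finset.sum_congr rfl
    intro i hi
    unfold decF
    rw [if_neg (Finset.ne_of_mem_erase hi)]
  have ha : 1 ≤ f i0 := by
    have := (lt_plen_iff hf (i := i0)).mp (by omega)
    omega
  have hdec : decF f i0 i0 = f i0 - 1 := if_pos rfl
  omega

lemma conj_decF (hf : IsPart f) (hi0 : plen f = i0 + 1) (j : ℕ) :
    conj (decF f i0) j = if j = f i0 - 1 then i0 else conj f j := by
  have hd := decF_isPart hf hi0
  have ha : 1 ≤ f i0 := by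
    have := (lt_plen_iff hf (i := i0)).mp (by omega)
    omega
  have hup : ∀ i, i ≤ i0 → f i0 ≤ f i := fun i hi => hf.1 hi
  have hzero : f (i0 + 1) = 0 := apply_eq_zero_of_plen_le hf (by omega)
  by_cases hj : j = f i0 - 1
  · rw [if_pos hj]
    apply conj_eq_of hd
    · intro i hi
      unfold decF
      rw [if_neg (by omega)]
      have := hup i (by omega)
      omega
    · show decF f i0 i0 ≤ j
      unfold decF
      rw [if_pos rfl]
      omega
  · rw [if_neg hj]
    have hc2 : ¬ (j + 1 ≤ f (conj f j)) := by
      intro hh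
      have := (lt_conj_iff hf).mp hh
      omega
    rcases Nat.lt_or_ge j (f i0 - 1) with hlt | hge
    · apply conj_eq_of hd
      · intro i hi
        have hfi : j + 1 ≤ f i := (lt_conj_iff hf).mpr (by omega)
        unfold decF
        split_ifs with h
        · subst h
          omega
        · omega
      · have hgt : i0 < conj f j := by
          have h1 : j + 1 ≤ f i0 := by omega
          have := (lt_conj_iff hf).mp h1
          omega
        unfold decF
        rw [if_neg (by omega)]
        omega
    · have hge' : f i0 ≤ j := by omega
      apply conj_eq_of hd
      · intro i hi
        have hfi : j + 1 ≤ f i := (lt_conj_iff hf).mpr (by omega)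
        unfold decF
        split_ifs with h
        · subst h
          omega
        · omega
      · unfold decF
        split_ifs with h
        · omega
        · omega

lemma rho_decF_eq (hf : IsPart f) (hi0 : plen f = i0 + 1)
    (hn : plen f ≤ n) (hm : f 0 ≤ m)
    (hd : IsPart (decF f i0)) (hn' : plen (decF f i0) ≤ n) (hm' : decF f i0 0 ≤ m)
    (x y : Fin (n + m)) (hx : (x : ℕ) = vval f n i0 - 1) (hy : (y : ℕ) = vval f n i0) :
    rho (decF f i0) n m hd hn' hm'
      = (rho f n m hf hn hm).trans (Equiv.swap x y) := by
  have ha : 1 ≤ f i0 := by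
    have := (lt_plen_iff hf (i := i0)).mp (by omega)
    omega
  have hi0n : i0 < n := by omega
  have hzero : f (i0 + 1) = 0 := apply_eq_zero_of_plen_le hf (by omega)
  have hup : ∀ i, i ≤ i0 → f i0 ≤ f i := fun i hi => hf.1 hi
  have hconj := conj_decF hf hi0
  have hcfa : conj f (f i0 - 1) = i0 + 1 := by
    apply conj_eq_of hf
    · intro i hi
      have := hup i (by omega)
      omega
    · rw [hzero]
      omega
  apply Equiv.ext
  rintro (i | j)
  · simp only [Equiv.trans_apply]
    by_cases hii : (i : ℕ) = i0
    · have hrfy : rho f n m hf hn hm (Sum.inl i) = y := by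
        apply Fin.ext
        rw [hy]
        show vval f n (i : ℕ) = vval f n i0
        rw [hii]
      rw [hrfy, Equiv.swap_apply_right]
      apply Fin.ext
      rw [hx]
      show vval (decF f i0) n (i : ℕ) = vval f n i0 - 1
      unfold vval decF
      rw [hii, if_pos rfl]
      omega
    · have hvy : vval f n (i : ℕ) ≠ vval f n i0 ∧ vval f n (i : ℕ) ≠ vval f n i0 - 1 := by
        rcases Nat.lt_or_ge (i : ℕ) i0 with hlt | hge
        · have h1 := vval_anti hf hlt hi0n
          have h2 : 1 ≤ vval f n i0 := by
            unfold vval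
            omega
          constructor <;> omega
        · have hgt : i0 + 1 ≤ (i : ℕ) := by omega
          have h1 := vval_le hf hgt i.isLt
          have h2 : vval f n (i0 + 1) = n - 1 - (i0 + 1) := by
            unfold vval
            omega
          have h3 : vval f n i0 = f i0 + (n - 1 - i0) := rfl
          constructor <;> omega
      have hfix : Equiv.swap x y (rho f n m hf hn hm (Sum.inl i))
          = rho f n m hf hn hm (Sum.inl i) := by
        apply Equiv.swap_apply_of_ne_of_ne
        · intro hcon
          have := congrArg Fin.val hcon
          rw [hx] at this
          exact hvy.2 this
        · intro hcon
          have := congrArg Fin.val hcon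
          rw [hy] at this
          exact hvy.1 this
      rw [hfix]
      apply Fin.ext
      show vval (decF f i0) n (i : ℕ) = vval f n (i : ℕ)
      unfold vval decF
      rw [if_neg hii]
  · simp only [Equiv.trans_apply]
    by_cases hjj : (j : ℕ) = f i0 - 1
    · have hrfx : rho f n m hf hn hm (Sum.inr j) = x := by
        apply Fin.ext
        rw [hx]
        show wval f n (j : ℕ) = vval f n i0 - 1
        unfold wval vval
        rw [hjj, hcfa]
        omega
      rw [hrfx, Equiv.swap_apply_left]
      apply Fin.ext
      rw [hy]
      show wval (decF f i0) n (j : ℕ) = vval f n i0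
      unfold wval vval
      rw [hconj, if_pos hjj, hjj]
      omega
    · have hwx : wval f n (j : ℕ) ≠ wval f n (f i0 - 1) := by
        rcases Nat.lt_or_ge (j : ℕ) (f i0 - 1) with hlt | hge
        · have := wval_mono hf hn hlt
          omega
        · have hgt : f i0 - 1 < (j : ℕ) := by omega
          have := wval_mono hf hn hgt
          omega
      have hxw : (x : ℕ) = wval f n (f i0 - 1) := by
        rw [hx]
        unfold wval vval
        rw [hcfa]
        omega
      have hfix : Equiv.swap x y (rho f n m hf hn hm (Sum.inr j))
          = rho f n m hf hn hm (Sum.inr j) := by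
        apply Equiv.swap_apply_of_ne_of_ne
        · intro hcon
          have hcv := congrArg Fin.val hcon
          rw [hxw] at hcv
          exact hwx hcv
        · intro hcon
          have hcv := congrArg Fin.val hcon
          rw [hy] at hcv
          exact (v_ne_w hf hn hi0n) hcv.symm
      rw [hfix]
      apply Fin.ext
      show wval (decF f i0) n (j : ℕ) = wval f n (j : ℕ)
      unfold wval
      rw [hconj, if_neg hjj]

end dec

lemma sign_piPerm (n m : ℕ) (W : ℕ) :
    ∀ (f : ℕ → ℕ) (hf : IsPart f) (hn : plen f ≤ n) (hm : f 0 ≤ m),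
      wsum f = W → Equiv.Perm.sign (piPerm f n m hf hn hm) = (-1) ^ W := by
  induction W with
  | zero =>
    intro f hf hn hm hw
    have hfz : f = zeroF := by
      funext i
      have h1 := le_wsum hf i
      rw [hw] at h1
      simpa [zeroF] using Nat.le_zero.mp h1
    subst hfz
    have hrefl : piPerm zeroF n m hf hn hm = Equiv.refl _ := Equiv.symm_trans_self _
    rw [hrefl]
    simp [pow_zero]
  | succ W ih =>
    intro f hf hn hm hw
    have hplen : 1 ≤ plen f := by
      by_contra h
      push_neg at h
      have hall : ∀ i, f i = 0 := fun i => apply_eq_zero_of_plen_le hf (by omega)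
      have h0 : wsum f = 0 := by
        rw [wsum_eq_sum (N := 0) (fun i _ => hall i)]
        simp
      omega
    obtain ⟨i0, hi0⟩ : ∃ i0, plen f = i0 + 1 := ⟨plen f - 1, by omega⟩
    have hd := decF_isPart hf hi0
    have hn' : plen (decF f i0) ≤ n := le_trans (plen_le_plen hd hf (decF_le f i0)) hn
    have hm' : decF f i0 0 ≤ m := le_trans (decF_le f i0 0) hm
    have hw' : wsum (decF f i0) = W := by
      have := wsum_decF hf hi0
      omega
    have hs := ih (decF f i0) hd hn' hm' hw'
    have ha : 1 ≤ f i0 := by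
      have := (lt_plen_iff hf (i := i0)).mp (by omega)
      omega
    have hylt : vval f n i0 < n + m := vval_lt hf hm (by omega)
    set y : Fin (n + m) := ⟨vval f n i0, hylt⟩ with hydef
    set x : Fin (n + m) := ⟨vval f n i0 - 1, by omega⟩ with hxdef
    have hswap := rho_decF_eq hf hi0 hn hm hd hn' hm' x y rfl rfl
    have hpi : piPerm (decF f i0) n m hd hn' hm'
        = (piPerm f n m hf hn hm).trans (Equiv.swap x y) := by
      unfold piPerm
      rw [hswap, ← Equiv.trans_assoc]
    have hxy : x ≠ y := by
      intro hcon
      have hcv := congrArg Fin.val hcon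
      have h1 : 1 ≤ vval f n i0 := by
        unfold vval
        omega
      simp only [hxdef, hydef] at hcv
      omega
    have hmul : Equiv.Perm.sign (piPerm (decF f i0) n m hd hn' hm')
        = Equiv.Perm.sign (Equiv.swap x y) * Equiv.Perm.sign (piPerm f n m hf hn hm) := by
      rw [hpi]
      have h2 : (piPerm f n m hf hn hm).trans (Equiv.swap x y)
          = (Equiv.swap x y) * (piPerm f n m hf hn hm) := rfl
      rw [h2, map_mul]
    rw [hs, Equiv.Perm.sign_swap hxy] at hmul
    have h3 : ((-1 : ℤˣ)) * ((-1 : ℤˣ) ^ W)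
        = Equiv.Perm.sign (piPerm f n m hf hn hm) := by
      rw [hmul, ← mul_assoc, neg_one_mul, neg_neg, one_mul]
    rw [← h3, pow_succ, mul_comm]

end

section
open Finset MvPolynomial Matrix



lemma jacobi (f g : ℕ → ℕ) (hf : IsPart f) (hg : IsPart g) {n m : ℕ}
    (hfn : plen f ≤ n) (hgn : plen g ≤ n) (hfm : f 0 ≤ m) (hgm : g 0 ≤ m) :
    negP (Sdet f g n) = (-1) ^ (wsum f + wsum g) * Sdet (conj f) (conj g) m := by
  set N := n + m with hN
  set ρ := rho f n m hf hfn hfm with hρ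
  set σ := rho g n m hg hgn hgm with hσ
  set P := (Mmat N).submatrix ρ σ with hP
  set Q := (Bmat N).submatrix σ ρ with hQ
  have hPQ : P * Q = 1 := by
    rw [hP, hQ, Matrix.submatrix_mul_equiv, Mmat_mul_Bmat, Matrix.submatrix_one_equiv]
  have hblock := block_inv_det P Q hPQ
  -- determinant of P
  have hperm : (ρ.symm.trans σ : Equiv.Perm (Fin N))
      = (piPerm f n m hf hfn hfm).symm.trans (piPerm g n m hg hgn hgm) := by
    apply Equiv.ext
    intro z
    simp [piPerm, Equiv.trans_apply]
    rfl
  have hsign : Equiv.Perm.sign (ρ.symm.trans σ : Equiv.Perm (Fin N))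
      = (-1) ^ (wsum f + wsum g) := by
    rw [hperm]
    have h1 : (piPerm f n m hf hfn hfm).symm.trans (piPerm g n m hg hgn hgm)
        = (piPerm g n m hg hgn hgm) * (piPerm f n m hf hfn hfm)⁻¹ := rfl
    rw [h1, _root_.map_mul, map_inv]
    rw [sign_piPerm n m (wsum f) f hf hfn hfm rfl,
      sign_piPerm n m (wsum g) g hg hgn hgm rfl]
    rw [Int.units_inv_eq_self, ← pow_add, Nat.add_comm]
  have hPdet : P.det = ((-1) ^ (wsum f + wsum g) : MvPolynomial ℕ ℚ) := by
    rw [hP, det_submatrix_equivs, det_Mmat, mul_one, hsign]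
    push_cast
    ring
  -- Q₁₁
  have hQ11 : Q.toBlocks₁₁.det = Sdet f g n := by
    have he : Q.toBlocks₁₁ = (Matrix.of fun i j : Fin n =>
        hInt ((f i : ℤ) - (g j : ℤ) - (i : ℤ) + (j : ℤ)))ᵀ := by
      apply Matrix.ext
      intro i j
      show hInt ((((ρ (Sum.inl j) : Fin N) : ℕ) : ℤ) - (((σ (Sum.inl i) : Fin N) : ℕ) : ℤ))
        = _
      rw [hρ, hσ, rho_inl, rho_inl]
      show hInt _ = hInt ((f j : ℤ) - (g i : ℤ) - (j : ℤ) + (i : ℤ))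
      congr 1
      have hi : (i : ℕ) < n := i.isLt
      have hj : (j : ℕ) < n := j.isLt
      unfold vval
      omega
    rw [he, Matrix.det_transpose]
    rfl
  -- P₂₂
  have hP22 : P.toBlocks₂₂.det = negP (Sdet (conj f) (conj g) m) := by
    have he : P.toBlocks₂₂ = (Matrix.of fun i j : Fin m =>
        hInt ((conj f i : ℤ) - (conj g j : ℤ) - (i : ℤ) + (j : ℤ))).map negP := by
      apply Matrix.ext
      intro i j
      show bInt ((((σ (Sum.inr j) : Fin N) : ℕ) : ℤ) - (((ρ (Sum.inr i) : Fin N) : ℕ) : ℤ))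
        = _
      rw [hρ, hσ, rho_inr, rho_inr]
      show bInt _ = negP (hInt ((conj f i : ℤ) - (conj g j : ℤ) - (i : ℤ) + (j : ℤ)))
      rw [bInt]
      congr 2
      have hi : (i : ℕ) < m := i.isLt
      have hj : (j : ℕ) < m := j.isLt
      have hcf : conj f (i : ℕ) ≤ n := le_trans (conj_le_plen hf _) hfn
      have hcg : conj g (j : ℕ) ≤ n := le_trans (conj_le_plen hg _) hgn
      unfold wval
      omega
    rw [he, Sdet, AlgHom.map_det, AlgHom.mapMatrix_apply]
  rw [hPdet, hQ11, hP22] at hblock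
  -- hblock : (-1)^k * Sdet f g n = negP (Sdet (conj f) (conj g) m)
  have hA : ((-1 : MvPolynomial ℕ ℚ)) ^ (wsum f + wsum g) * negP (Sdet f g n)
      = Sdet (conj f) (conj g) m := by
    have h2 := congrArg negP hblock
    rw [_root_.map_mul, negP_negP, _root_.map_pow, _root_.map_neg, _root_.map_one] at h2
    exact h2
  have hsq : ((-1 : MvPolynomial ℕ ℚ)) ^ (wsum f + wsum g)
      * ((-1 : MvPolynomial ℕ ℚ)) ^ (wsum f + wsum g) = 1 := by
    rw [← pow_add]
    exact Even.neg_one_pow ⟨wsum f + wsum g, by ring⟩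
  calc negP (Sdet f g n)
      = ((-1 : MvPolynomial ℕ ℚ) ^ (wsum f + wsum g)
          * (-1 : MvPolynomial ℕ ℚ) ^ (wsum f + wsum g)) * negP (Sdet f g n) := by
        rw [hsq, one_mul]
    _ = (-1) ^ (wsum f + wsum g)
          * ((-1 : MvPolynomial ℕ ℚ) ^ (wsum f + wsum g) * negP (Sdet f g n)) := by ring
    _ = (-1) ^ (wsum f + wsum g) * Sdet (conj f) (conj g) m := by rw [hA]

end

section
open Finset MvPolynomial Matrix


lemma card_fin_lt {n k : ℕ} (hk : k ≤ n) :
    (Finset.univ.filter fun b : Fin n => (b : ℕ) < k).card = k := by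
  apply Finset.card_eq_of_bijective (fun i hi => (⟨i, lt_of_lt_of_le hi hk⟩ : Fin n))
  · intro a ha
    rw [Finset.mem_filter] at ha
    exact ⟨(a : ℕ), ha.2, Fin.ext rfl⟩
  · intro i hi
    rw [Finset.mem_filter]
    exact ⟨Finset.mem_univ _, hi⟩
  · intro i j hi hj h
    have := congrArg Fin.val h
    simpa using this

lemma Sdet_eq_zero {f g : ℕ → ℕ} (hf : IsPart f) (hg : IsPart g) {n r : ℕ} (hr : r < n)
    (h : f r < g r) : Sdet f g n = 0 := by
  rw [Sdet, Matrix.det_apply]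
  apply Finset.sum_eq_zero
  intro π _
  have hex : ∃ b : Fin n, (b : ℕ) ≤ r ∧ r ≤ ((π b : Fin n) : ℕ) := by
    by_contra hcon
    push_neg at hcon
    have himg : (Finset.univ.filter fun b : Fin n => (b : ℕ) < r + 1).image π
        ⊆ Finset.univ.filter fun a : Fin n => (a : ℕ) < r := by
      intro a ha
      rw [Finset.mem_image] at ha
      obtain ⟨b, hb, rfl⟩ := ha
      rw [Finset.mem_filter] at hb ⊢
      exact ⟨Finset.mem_univ _, hcon b (by omega)⟩
    have hcard := Finset.card_le_card himg
    rw [Finset.card_image_of_injective _ π.injective] at hcard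
    rw [card_fin_lt (by omega), card_fin_lt (by omega)] at hcard
    omega
  obtain ⟨b, hb, hπb⟩ := hex
  have hzero : Matrix.of (fun i j : Fin n =>
      hInt ((f i : ℤ) - (g j : ℤ) - (i : ℤ) + (j : ℤ))) (π b) b = 0 := by
    show hInt _ = 0
    apply hInt_neg
    have h1 : f ((π b : Fin n) : ℕ) ≤ f r := hf.1 hπb
    have h2 : g r ≤ g (b : ℕ) := hg.1 hb
    have h3 : ((π b : Fin n) : ℕ) < n := (π b).isLt
    omega
  have hprod : (∏ i : Fin n, Matrix.of (fun i j : Fin n =>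
      hInt ((f i : ℤ) - (g j : ℤ) - (i : ℤ) + (j : ℤ))) (π i) i) = 0 :=
    Finset.prod_eq_zero (Finset.mem_univ b) hzero
  rw [hprod, smul_zero]


lemma kappa_eq_sum {f : ℕ → ℕ} {N : ℕ} (hN : ∀ i, N ≤ i → f i = 0) :
    kappa f = ∑ i ∈ Finset.range N, (f i : ℤ) * ((f i : ℤ) - 2 * (i : ℤ) - 1) := by
  apply finsum_eq_sum_of_support_subset
  intro i hi
  simp only [Function.mem_support] at hi
  simp only [Finset.coe_range, Set.mem_Iio]
  by_contra hcon
  have h0 := hN i (by omega)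
  rw [h0] at hi
  simp at hi

lemma cells_sum {f : ℕ → ℕ} (hf : IsPart f) {N : ℕ} (hN : ∀ i, N ≤ i → f i = 0)
    (hb : f 0 ≤ N) :
    kappa f = 2 * ∑ p ∈ (Finset.range N ×ˢ Finset.range N).filter (fun p => p.2 < f p.1),
        ((p.2 : ℤ) - (p.1 : ℤ)) := by
  rw [kappa_eq_sum hN, Finset.sum_filter, Finset.sum_product, Finset.mul_sum]
  apply Finset.sum_congr rfl
  intro i _
  rw [← Finset.sum_filter]
  have hfil : (Finset.range N).filter (fun j => j < f i) = Finset.range (f i) := by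
    ext j
    simp only [Finset.mem_filter, Finset.mem_range]
    have := hf.1 (Nat.zero_le i)
    omega
  rw [hfil]
  simp only [show ∀ x : ℕ, ((((i, x).2 : ℕ) : ℤ) - (((i, x).1 : ℕ) : ℤ)) = ((x : ℤ) - (i : ℤ))
    from fun _ => rfl]
  rw [Finset.sum_sub_distrib, Finset.sum_const, Finset.card_range]
  have hgauss : ∀ k : ℕ, (∑ j ∈ Finset.range k, (j : ℤ)) * 2 = (k : ℤ) * ((k : ℤ) - 1) := by
    intro k
    induction k with
    | zero => simp
    | succ k ih =>
      rw [Finset.sum_range_succ, add_mul, ih]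
      push_cast
      ring
  have hg := hgauss (f i)
  simp only [nsmul_eq_mul]
  linear_combination -hg

lemma kappa_conj {f : ℕ → ℕ} (hf : IsPart f) : kappa (conj f) = - kappa f := by
  obtain ⟨N0, hN0⟩ := hf.2
  set N := max N0 (max (f 0) (plen f)) with hNdef
  have hNf : ∀ i, N ≤ i → f i = 0 := fun i hi => hN0 i (by omega)
  have hbf : f 0 ≤ N := by omega
  have hNc : ∀ j, N ≤ j → conj f j = 0 := fun j hj => conj_eq_zero hf (by omega)
  have hbc : conj f 0 ≤ N := by
    have := conj_le_plen hf 0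
    omega
  rw [cells_sum hf hNf hbf, cells_sum (conj_isPart hf) hNc hbc]
  have hbij : ∑ p ∈ (Finset.range N ×ˢ Finset.range N).filter (fun p => p.2 < conj f p.1),
        ((p.2 : ℤ) - (p.1 : ℤ))
      = ∑ p ∈ (Finset.range N ×ˢ Finset.range N).filter (fun p => p.2 < f p.1),
        ((p.1 : ℤ) - (p.2 : ℤ)) := by
    apply Finset.sum_nbij' (i := fun p => (p.2, p.1)) (j := fun p => (p.2, p.1))
    · rintro ⟨j, i⟩ hp
      simp only [Finset.mem_filter, Finset.mem_product, Finset.mem_range] at hp ⊢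
      have hiff := lt_conj_iff hf (i := i) (j := j)
      refine ⟨⟨hp.1.2, hp.1.1⟩, ?_⟩
      omega
    · rintro ⟨i, j⟩ hp
      simp only [Finset.mem_filter, Finset.mem_product, Finset.mem_range] at hp ⊢
      have hiff := lt_conj_iff hf (i := i) (j := j)
      refine ⟨⟨hp.1.2, hp.1.1⟩, ?_⟩
      omega
    · rintro ⟨j, i⟩ _
      rfl
    · rintro ⟨i, j⟩ _
      rfl
    · rintro ⟨j, i⟩ _
      rfl
  rw [hbij]
  rw [neg_mul_eq_mul_neg, ← Finset.sum_neg_distrib]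
  congr 1
  apply Finset.sum_congr rfl
  intro p _
  ring

end

section
open Finset MvPolynomial



lemma NPartition.isPart (η : NPartition) : IsPart η.part := ⟨η.antitone, η.eventually_zero⟩

lemma NPartition.ext' {a b : NPartition} (h : a.part = b.part) : a = b := by
  cases a; cases b; cases h; rfl

noncomputable def conjP : NPartition ≃ NPartition where
  toFun η := ⟨conj η.part, fun _ _ h => conj_anti η.isPart h,
    ⟨η.part 0, fun _ h => conj_eq_zero η.isPart h⟩⟩
  invFun η := ⟨conj η.part, fun _ _ h => conj_anti η.isPart h,
    ⟨η.part 0, fun _ h => conj_eq_zero η.isPart h⟩⟩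
  left_inv η := NPartition.ext' (conj_conj η.isPart)
  right_inv η := NPartition.ext' (conj_conj η.isPart)

lemma conjP_part (η : NPartition) : (conjP η).part = conj η.part := rfl




lemma iota_X_pow (ι : RatFunc ℚ ≃+* RatFunc ℚ) (hι : ι RatFunc.X = RatFunc.X⁻¹) (z : ℤ) :
    ι ((RatFunc.X : RatFunc ℚ) ^ z) = (RatFunc.X : RatFunc ℚ) ^ (-z) := by
  rw [map_zpow₀, hι, inv_zpow, ← zpow_neg]

lemma iota_Pspec (ι : RatFunc ℚ ≃+* RatFunc ℚ) (hι : ι RatFunc.X = RatFunc.X⁻¹) (k : ℕ) :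
    ι (Pspec k) = - Pspec k := by
  rw [Pspec, map_inv₀, map_sub, map_zpow₀, map_zpow₀, hι, inv_zpow, ← zpow_neg, inv_zpow,
    ← zpow_neg, neg_neg, ← neg_sub, inv_neg]

lemma iota_aeval (ι : RatFunc ℚ ≃+* RatFunc ℚ) (hι : ι RatFunc.X = RatFunc.X⁻¹)
    (p : MvPolynomial ℕ ℚ) :
    ι (MvPolynomial.aeval Pspec p) = MvPolynomial.aeval Pspec (negP p) := by
  have hcomp : RingHom.toRatAlgHom ((ι : RatFunc ℚ →+* RatFunc ℚ).comp
        ((MvPolynomial.aeval Pspec : MvPolynomial ℕ ℚ →ₐ[ℚ] RatFunc ℚ) :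
          MvPolynomial ℕ ℚ →+* RatFunc ℚ))
      = (MvPolynomial.aeval Pspec).comp negP := by
    apply algHom_ext
    intro k
    show ι (MvPolynomial.aeval Pspec (X k)) = MvPolynomial.aeval Pspec (negP (X k))
    rw [negP_X, aeval_X, map_neg, aeval_X, iota_Pspec ι hι]
  have := DFunLike.congr_fun hcomp p
  exact this

lemma Seval_iota (ι : RatFunc ℚ ≃+* RatFunc ℚ) (hι : ι RatFunc.X = RatFunc.X⁻¹)
    {f g : ℕ → ℕ} {n m : ℕ} (hf : IsPart f) (hg : IsPart g)
    (hfn : plen f ≤ n) (hgn : plen g ≤ n) (hfm : f 0 ≤ m) (hgm : g 0 ≤ m) :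
    ι (Seval f g n) = (-1) ^ (wsum f + wsum g) * Seval (conj f) (conj g) m := by
  rw [Seval, iota_aeval ι hι, jacobi f g hf hg hfn hgn hfm hgm, map_mul, map_pow, map_neg,
    map_one, Seval]

lemma finite_contained (c : ℕ → ℕ) (hc : IsPart c) :
    {η : NPartition | ∀ i, η.part i ≤ c i}.Finite := by
  obtain ⟨N, hN⟩ := hc.2
  have hfin : Finite {η : NPartition | ∀ i, η.part i ≤ c i} := by
    have hinj : Function.Injective
        (fun η : {η : NPartition | ∀ i, η.part i ≤ c i} =>
          (fun i : Fin N => (⟨η.1.part i,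
            Nat.lt_succ_of_le (le_trans (η.2 i) (hc.1 (Nat.zero_le _)))⟩ : Fin (c 0 + 1)))) := by
      intro a b h
      apply Subtype.ext
      apply NPartition.ext'
      funext i
      rcases Nat.lt_or_ge i N with hi | hi
      · have h2 := congrFun h ⟨i, hi⟩
        simpa using h2
      · have h1 : a.1.part i ≤ c i := a.2 i
        have h2 : b.1.part i ≤ c i := b.2 i
        rw [hN i hi] at h1 h2
        omega
    exact Finite.of_injective _ hinj
  exact Set.toFinite _

lemma support_subset (f g : ℕ → ℕ) (hf : IsPart f) (hg : IsPart g) :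
    (Function.support fun η : NPartition =>
      Seval (conj f) η.part (max (f 0) (max (g 0) (plen η.part))) *
      Seval (conj g) η.part (max (f 0) (max (g 0) (plen η.part))))
      ⊆ {η : NPartition | ∀ i, η.part i ≤ conj f i} := by
  intro η hη
  simp only [Function.mem_support] at hη
  by_contra hcon
  simp only [Set.mem_setOf_eq] at hcon
  push_neg at hcon
  obtain ⟨i0, hi0⟩ := hcon
  apply hη
  have hi0lt : i0 + 1 ≤ plen η.part := (lt_plen_iff η.isPart).mpr (by omega)
  have hz : Sdet (conj f) η.part (max (f 0) (max (g 0) (plen η.part))) = 0 :=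
    Sdet_eq_zero (conj_isPart hf) η.isPart (r := i0)
      (by have := le_max_right (f 0) (max (g 0) (plen η.part));
          have := le_max_right (g 0) (plen η.part); omega) hi0
  rw [Seval, hz, map_zero, zero_mul]

lemma my_map_finsum {α : Type*} (ι : RatFunc ℚ ≃+* RatFunc ℚ) (F : α → RatFunc ℚ)
    (h : (Function.support F).Finite) : ι (∑ᶠ a, F a) = ∑ᶠ a, ι (F a) :=
  AddMonoidHom.map_finsum (AddMonoidHom.mk' ι (fun a b => map_add ι a b)) h

lemma Wtl_inv (f g : ℕ → ℕ) (hf : IsPart f) (hg : IsPart g)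
    (ι : RatFunc ℚ ≃+* RatFunc ℚ) (hι : ι RatFunc.X = RatFunc.X⁻¹) :
    Wtl f g = (-1) ^ (wsum f + wsum g) * ι (Wtl (conj f) (conj g)) := by
  have hfc := conj_isPart hf
  have hgc := conj_isPart hg
  set k := wsum f + wsum g with hk
  have hTfin : (Function.support (fun η : NPartition =>
      Seval (conj f) η.part (max (f 0) (max (g 0) (plen η.part))) *
      Seval (conj g) η.part (max (f 0) (max (g 0) (plen η.part))))).Finite :=
    Set.Finite.subset (finite_contained _ (conj_isPart hf)) (support_subset f g hf hg)
  have hT'fin : (Function.support (fun η : NPartition =>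
      Seval (conj (conj f)) η.part (max ((conj f) 0) (max ((conj g) 0) (plen η.part))) *
      Seval (conj (conj g)) η.part (max ((conj f) 0) (max ((conj g) 0) (plen η.part))))).Finite :=
    Set.Finite.subset (finite_contained _ (conj_isPart hfc))
      (support_subset (conj f) (conj g) hfc hgc)
  have hterm : ∀ η : NPartition,
      ι (Seval (conj (conj f)) (conjP η).part
          (max ((conj f) 0) (max ((conj g) 0) (plen (conjP η).part))) *
        Seval (conj (conj g)) (conjP η).part
          (max ((conj f) 0) (max ((conj g) 0) (plen (conjP η).part))))
      = (-1 : RatFunc ℚ) ^ k *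
        (Seval (conj f) η.part (max (f 0) (max (g 0) (plen η.part))) *
         Seval (conj g) η.part (max (f 0) (max (g 0) (plen η.part)))) := by
    intro η
    have hη := η.isPart
    have hηc := conj_isPart hη
    rw [conjP_part, conj_conj hf, conj_conj hg, map_mul]
    have hpc : plen (conj η.part) = η.part 0 := plen_conj hη
    have hcf0 : (conj f) 0 = plen f := (plen_eq_conj_zero f).symm
    have hcg0 : (conj g) 0 = plen g := (plen_eq_conj_zero g).symm
    have hce0 : (conj η.part) 0 = plen η.part := (plen_eq_conj_zero η.part).symm
    rw [Seval_iota ι hι (m := max (f 0) (max (g 0) (plen η.part))) hf hηc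
      (by rw [← hcf0]; exact le_max_left _ _)
      (le_trans (le_max_right _ _) (le_max_right _ _))
      (le_max_left _ _)
      (by rw [hce0]; exact le_trans (le_max_right _ _) (le_max_right _ _))]
    rw [Seval_iota ι hι (m := max (f 0) (max (g 0) (plen η.part))) hg hηc
      (by rw [← hcg0]; exact le_trans (le_max_left _ _) (le_max_right _ _))
      (le_trans (le_max_right _ _) (le_max_right _ _))
      (le_trans (le_max_left _ _) (le_max_right _ _))
      (by rw [hce0]; exact le_trans (le_max_right _ _) (le_max_right _ _))]
    rw [conj_conj hη]
    rw [mul_mul_mul_comm]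
    congr 1
    rw [← pow_add]
    have he : wsum f + wsum (conj η.part) + (wsum g + wsum (conj η.part))
        = k + 2 * wsum (conj η.part) := by omega
    rw [he, pow_add, pow_mul, neg_one_sq, one_pow, mul_one]
  rw [Wtl, Wtl, map_mul, iota_X_pow ι hι]
  have hκ : -(kappa (conj f) + kappa (conj g)) = kappa f + kappa g := by
    rw [kappa_conj hf, kappa_conj hg]
    ring
  rw [hκ]
  rw [my_map_finsum ι _ hT'fin]
  have hR : (∑ᶠ η : NPartition,
        ι (Seval (conj (conj f)) η.part (max ((conj f) 0) (max ((conj g) 0) (plen η.part))) *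
          Seval (conj (conj g)) η.part (max ((conj f) 0) (max ((conj g) 0) (plen η.part)))))
      = (-1 : RatFunc ℚ) ^ k * ∑ᶠ η : NPartition,
          Seval (conj f) η.part (max (f 0) (max (g 0) (plen η.part))) *
          Seval (conj g) η.part (max (f 0) (max (g 0) (plen η.part))) := by
    rw [← finsum_comp_equiv conjP (f := fun η : NPartition =>
      ι (Seval (conj (conj f)) η.part (max ((conj f) 0) (max ((conj g) 0) (plen η.part))) *
        Seval (conj (conj g)) η.part (max ((conj f) 0) (max ((conj g) 0) (plen η.part)))))]
    rw [finsum_congr hterm]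
    rw [← mul_finsum' _ _ hTfin]
  rw [hR]
  have hsq : ((-1 : RatFunc ℚ)) ^ k * ((-1 : RatFunc ℚ)) ^ k = 1 := by
    rw [← pow_add]
    exact Even.neg_one_pow ⟨k, by ring⟩
  rw [show ∀ A B : RatFunc ℚ, (-1 : RatFunc ℚ) ^ k * (A * ((-1 : RatFunc ℚ) ^ k * B))
      = ((-1 : RatFunc ℚ) ^ k * (-1 : RatFunc ℚ) ^ k) * (A * B) from fun A B => by ring,
    hsq, one_mul]

end

/-- Inversion symmetry of the two-leg topological vertex:
`W_{ν ν̄}(w) = (−1)^{|ν|+|ν̄|} ι(W_{νᵀ ν̄ᵀ}(w))` where ι is the field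
automorphism of `ℚ(w)` with `ι(w) = w⁻¹`. -/
theorem topological_vertex_inversion (ν νb : NPartition)
    (ι : RatFunc ℚ ≃+* RatFunc ℚ) (hι : ι RatFunc.X = RatFunc.X⁻¹) :
    Wtl ν.part νb.part
      = (-1) ^ (wsum ν.part + wsum νb.part) *
          ι (Wtl (conj ν.part) (conj νb.part)) := by
  exact Wtl_inv ν.part νb.part ν.isPart νb.isPart ι hι
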